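/- Let X be a nested almost convex set with n = |X| ≥ 2 points. Then n is even and the set of extreme points of the convex hull of X has exactly (n+2)/2 elements; in particular X contains more than n/2 points in convex position. -/

import Mathlib

open Set

noncomputable section

/-- Points of the plane. -/
abbrev Pt : Type := ℝ × ℝ

/-- The orientation determinant of the triple `(a, b, c)`:
`c` lies strictly to the left of the directed line from `a` to `b` iff `orient a b c > 0`. -/
def orient (a b c : Pt) : ℝ :=
  (b.1 - a.1) * (c.2 - a.2) - (b.2 - a.2) * (c.1 - a.1)

/-- A set of points is in general position if no three pairwise distinct points are collinear. -/
def GenPos (X : Set Pt) : Prop :=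
  ∀ a ∈ X, ∀ b ∈ X, ∀ c ∈ X, a ≠ b → a ≠ c → b ≠ c → orient a b c ≠ 0

/-- The set of extreme points of the convex hull of `S`. -/
def extremePts (S : Set Pt) : Set Pt := Set.extremePoints ℝ (convexHull ℝ S)

/-- Remove the extreme points of the convex hull (one peeling step of convex layers). -/
def peel (S : Set Pt) : Set Pt := S \ extremePts S

/-- `X` has exactly `k` convex layers. -/
def HasLayers (X : Set Pt) (k : ℕ) : Prop :=
  peel^[k] X = ∅ ∧ ∀ j < k, peel^[j] X ≠ ∅

/-- `X_j`, the union of the `j` innermost convex layers (when `X` has `k` layers). -/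
def layerSub (X : Set Pt) (k j : ℕ) : Set Pt := peel^[k - j] X

/-- `R_j`, the `j`-th convex layer of `X` (when `X` has `k` layers), `R_1` innermost. -/
def layer (X : Set Pt) (k j : ℕ) : Set Pt := extremePts (layerSub X k j)

/-- `X` is a nested almost convex set. -/
def IsNACS (X : Set Pt) : Prop :=
  X.Finite ∧ X.Nonempty ∧ GenPos X ∧
  ∀ k, HasLayers X k →
    ∀ j, 1 ≤ j → j ≤ k →
      ∀ a ∈ layer X k j, ∀ b ∈ layer X k j, ∀ c ∈ layer X k j,
        a ≠ b → a ≠ c → b ≠ c →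
        ∃! p : Pt, p ∈ layerSub X k (j - 1) ∩ interior (convexHull ℝ ({a, b, c} : Set Pt))

/-- `q` is a counterclockwise enumeration of `S`. -/
def CCWEnum {m : ℕ} (S : Set Pt) (q : Fin m → Pt) : Prop :=
  Function.Injective q ∧ Set.range q = S ∧
  ∀ a b c : Fin m, a < b → b < c → 0 < orient (q a) (q b) (q c)

/-- The ordered pair `(q1, q2)` of points of `R` is adoptable from `p`. -/
def AdoptablePair (R : Set Pt) (p q1 q2 : Pt) : Prop :=
  ∀ q3 ∈ R \ ({q1, q2} : Set Pt), p ∈ interior (convexHull ℝ ({q1, q2, q3} : Set Pt))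

/-- The `i`-th binary string of length `j` in lexicographic order (`false` before `true`). -/
def strOfNat (j i : ℕ) : List Bool :=
  (List.range j).map fun t => i.testBit (j - 1 - t)

/-- The numeric (lexicographic) rank of a binary string among strings of its length. -/
def natOfStr (s : List Bool) : ℕ := s.foldl (fun n b => 2 * n + b.toNat) 0

/-- The leftmost `k`-level descendant of the node `s`. -/
def firstStr (k : ℕ) (s : List Bool) : List Bool := s ++ List.replicate (k - s.length) false

/-- The rightmost `k`-level descendant of the node `s`. -/
def lastStr (k : ℕ) (s : List Bool) : List Bool := s ++ List.replicate (k - s.length) true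

/-- Non-root nodes of the tree `T₁(k)`: binary strings of length `1..k`. -/
def ValidNode1 (k : ℕ) (s : List Bool) : Prop := 1 ≤ s.length ∧ s.length ≤ k

/-- A type-1 labeling of `X`, given by its label function `x` (the inverse of `ψ`). -/
def IsLabeling1 (k : ℕ) (X : Set Pt) (x : List Bool → Pt) : Prop :=
  Set.InjOn x {s | ValidNode1 k s} ∧ x '' {s | ValidNode1 k s} = X

/-- A type-1 labeling is nested. -/
def Nested1 (k : ℕ) (X : Set Pt) (x : List Bool → Pt) : Prop :=
  ∀ j, 1 ≤ j → j ≤ k →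
    CCWEnum (layer X k j) fun i : Fin (2 ^ j) => x (strOfNat j i.val)

/-- A type-1 labeling is adoptable. -/
def Adoptable1 (k : ℕ) (X : Set Pt) (x : List Bool → Pt) : Prop :=
  ∀ s : List Bool, 1 ≤ s.length → s.length + 1 ≤ k →
    AdoptablePair (layer X k (s.length + 1)) (x s) (x (s ++ [false])) (x (s ++ [true]))

/-- `previous[R_k(u)]` for a type-1 labeling: the cyclic predecessor (in the left-to-right,
i.e. counterclockwise, order of the `k`-level) of `first[R_k(u)]`. -/
def prev1 (k : ℕ) (x : List Bool → Pt) (s : List Bool) : Pt :=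
  x (strOfNat k ((natOfStr (firstStr k s) + (2 ^ k - 1)) % 2 ^ k))

/-- `next[R_k(u)]` for a type-1 labeling: the cyclic successor of `last[R_k(u)]`. -/
def next1 (k : ℕ) (x : List Bool → Pt) (s : List Bool) : Pt :=
  x (strOfNat k ((natOfStr (lastStr k s) + 1) % 2 ^ k))

/-- A type-1 labeling is well laid. -/
def WellLaid1 (k : ℕ) (x : List Bool → Pt) : Prop :=
  ∀ s : List Bool, 1 ≤ s.length → s.length ≤ k →
    x s ∈ convexHull ℝ ({prev1 k x s, x (firstStr k s), x (lastStr k s)} : Set Pt) ∧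
    x s ∈ convexHull ℝ ({x (firstStr k s), x (lastStr k s), next1 k x s} : Set Pt)

/-- `X_u` for a type-1 labeling: the labels of the proper descendants of `s`. -/
def descSet1 (k : ℕ) (x : List Bool → Pt) (s : List Bool) : Set Pt :=
  x '' {t | ValidNode1 k t ∧ s <+: t ∧ s ≠ t}

/-- `X̄_u = X_u ∪ {x_u}` for a type-1 labeling. -/
def barSet1 (k : ℕ) (x : List Bool → Pt) (s : List Bool) : Set Pt :=
  insert (x s) (descSet1 k x s)

/-- A type-1 labeling is an internal separation. -/
def InternalSep1 (k : ℕ) (X : Set Pt) (x : List Bool → Pt) : Prop :=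
  ∀ s : List Bool, s.length + 1 ≤ k →
    ∀ y ∈ X \ descSet1 k x s,
      ∀ a ∈ barSet1 k x (s ++ [false]), ∀ b ∈ barSet1 k x (s ++ [true]),
        0 < orient a b y

/-- A type-1 labeling is an external separation. -/
def ExternalSep1 (k : ℕ) (X : Set Pt) (x : List Bool → Pt) : Prop :=
  ∀ s : List Bool, 1 ≤ s.length → s.length + 1 ≤ k →
    ∀ y ∈ X \ barSet1 k x s,
      (∀ a ∈ barSet1 k x (s ++ [false]), 0 < orient a (x s) y) ∧
      (∀ b ∈ barSet1 k x (s ++ [true]), 0 < orient (x s) b y)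

/-- Nodes of the tree `T₂(k)`: the root `none`, and pairs `(c, s)`. -/
abbrev Node2 : Type := Option (Fin 3 × List Bool)

/-- Valid nodes of `T₂(k)`: the root, and pairs `(c, s)` with `|s| ≤ k - 2`. -/
def ValidNode2 (k : ℕ) : Node2 → Prop
  | none => True
  | some (_, s) => s.length + 2 ≤ k

/-- A type-2 labeling of `X`, given by its label function `x` (the inverse of `ψ`). -/
def IsLabeling2 (k : ℕ) (X : Set Pt) (x : Node2 → Pt) : Prop :=
  Set.InjOn x {u | ValidNode2 k u} ∧ x '' {u | ValidNode2 k u} = X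

/-- The `i`-th node (left-to-right) of the `(j+2)`-level of `T₂(k)`. -/
def node2At (j i : ℕ) : Node2 :=
  some (⟨i / 2 ^ j % 3, by omega⟩, strOfNat j (i % 2 ^ j))

/-- A type-2 labeling is nested. -/
def Nested2 (k : ℕ) (X : Set Pt) (x : Node2 → Pt) : Prop :=
  CCWEnum (layer X k 1) (fun _ : Fin 1 => x none) ∧
  ∀ j : ℕ, j + 2 ≤ k →
    CCWEnum (layer X k (j + 2)) fun i : Fin (3 * 2 ^ j) => x (node2At j i.val)

/-- A type-2 labeling is adoptable. -/
def Adoptable2 (k : ℕ) (X : Set Pt) (x : Node2 → Pt) : Prop :=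
  ∀ (c : Fin 3) (s : List Bool), s.length + 3 ≤ k →
    AdoptablePair (layer X k (s.length + 3)) (x (some (c, s)))
      (x (some (c, s ++ [false]))) (x (some (c, s ++ [true])))

/-- `previous[R_k(u)]` for a type-2 labeling, `u = (c, s)`. -/
def prev2 (k : ℕ) (x : Node2 → Pt) (c : Fin 3) (s : List Bool) : Pt :=
  x (node2At (k - 2)
      ((c.val * 2 ^ (k - 2) + natOfStr (firstStr (k - 2) s) + (3 * 2 ^ (k - 2) - 1)) %
        (3 * 2 ^ (k - 2))))

/-- `next[R_k(u)]` for a type-2 labeling, `u = (c, s)`. -/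
def next2 (k : ℕ) (x : Node2 → Pt) (c : Fin 3) (s : List Bool) : Pt :=
  x (node2At (k - 2)
      ((c.val * 2 ^ (k - 2) + natOfStr (lastStr (k - 2) s) + 1) % (3 * 2 ^ (k - 2))))

/-- A type-2 labeling is well laid (the root is the only node with `R_k(u) = R_k`). -/
def WellLaid2 (k : ℕ) (x : Node2 → Pt) : Prop :=
  ∀ (c : Fin 3) (s : List Bool), s.length + 2 ≤ k →
    x (some (c, s)) ∈ convexHull ℝ
      ({prev2 k x c s, x (some (c, firstStr (k - 2) s)),
        x (some (c, lastStr (k - 2) s))} : Set Pt) ∧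
    x (some (c, s)) ∈ convexHull ℝ
      ({x (some (c, firstStr (k - 2) s)), x (some (c, lastStr (k - 2) s)),
        next2 k x c s} : Set Pt)

/-- `X_u` for a type-2 labeling and a non-root node `u = (c, s)`. -/
def descSet2 (k : ℕ) (x : Node2 → Pt) (c : Fin 3) (s : List Bool) : Set Pt :=
  x '' {u | ∃ t : List Bool, u = some (c, t) ∧ t.length + 2 ≤ k ∧ s <+: t ∧ s ≠ t}

/-- `X̄_u = X_u ∪ {x_u}` for a type-2 labeling and a non-root node `u = (c, s)`. -/
def barSet2 (k : ℕ) (x : Node2 → Pt) (c : Fin 3) (s : List Bool) : Set Pt :=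
  insert (x (some (c, s))) (descSet2 k x c s)

/-- A type-2 labeling is an internal separation. -/
def InternalSep2 (k : ℕ) (X : Set Pt) (x : Node2 → Pt) : Prop :=
  (∀ (c : Fin 3) (s : List Bool), s.length + 3 ≤ k →
    ∀ y ∈ X \ descSet2 k x c s,
      ∀ a ∈ barSet2 k x c (s ++ [false]), ∀ b ∈ barSet2 k x c (s ++ [true]),
        0 < orient a b y) ∧
  (∀ i : Fin 3,
    ∀ y ∈ X \ (barSet2 k x i [] ∪ barSet2 k x (i + 1) []),
      ∀ a ∈ barSet2 k x i [], ∀ b ∈ barSet2 k x (i + 1) [],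
        0 < orient a b y)

/-- A type-2 labeling is an external separation. -/
def ExternalSep2 (k : ℕ) (X : Set Pt) (x : Node2 → Pt) : Prop :=
  ∀ (c : Fin 3) (s : List Bool), s.length + 3 ≤ k →
    ∀ y ∈ X \ barSet2 k x c s,
      (∀ a ∈ barSet2 k x c (s ++ [false]), 0 < orient a (x (some (c, s))) y) ∧
      (∀ b ∈ barSet2 k x c (s ++ [true]), 0 < orient (x (some (c, s))) b y)

/-- One corner-refinement step: from `α_s = (q, o, p)` to `α_{s0}` (for `b = false`)
or `α_{s1}` (for `b = true`). -/
def cornerStep (α : Pt × Pt × Pt) (b : Bool) : Pt × Pt × Pt :=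
  let q := α.1
  let o := α.2.1
  let p := α.2.2
  if b then (o + (1 / 5 : ℝ) • (q - o), o + (1 / 5 : ℝ) • (p - o), o + (2 / 5 : ℝ) • (p - o))
  else (o + (2 / 5 : ℝ) • (q - o), o + (1 / 5 : ℝ) • (q - o), o + (1 / 5 : ℝ) • (p - o))

/-- The corner `α_s = (q_s, o_s, p_s)` assigned to the binary string `s` (with parameter `k`). -/
def corner (k : ℕ) (s : List Bool) : Pt × Pt × Pt :=
  s.foldl cornerStep
    (((0 : ℝ), (2 * 5 ^ (k + 1) : ℝ)), ((0 : ℝ), (0 : ℝ)), ((2 * 5 ^ (k + 1) : ℝ), (0 : ℝ)))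

/-- The point `y_v` for a binary string `v = s ++ [b]` of positive length. -/
def ypt (k : ℕ) (v : List Bool) : Pt :=
  let α := corner k v.dropLast
  if v.getLastD false then α.2.1 + (1 / 5 : ℝ) • (α.2.2 - α.2.1)
  else α.2.1 + (1 / 5 : ℝ) • (α.1 - α.2.1)

/-- The point `x_s`: the midpoint of `y_{s·0^(k+1−|s|)}` and `y_{s·1^(k+1−|s|)}`. -/
def xpt (k : ℕ) (s : List Bool) : Pt :=
  (1 / 2 : ℝ) •
    (ypt k (s ++ List.replicate (k + 1 - s.length) false) +
      ypt k (s ++ List.replicate (k + 1 - s.length) true))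

lemma orient_cyc (a b c : Pt) : orient a b c = orient b c a := by unfold orient; ring
lemma orient_neg (a b c : Pt) : orient a b c = - orient a c b := by unfold orient; ring
@[simp] lemma orient_aba (a b : Pt) : orient a b a = 0 := by unfold orient; ring
@[simp] lemma orient_abb (a b : Pt) : orient a b b = 0 := by unfold orient; ring
lemma orient_combo (a b x y : Pt) (s t : ℝ) (h : s + t = 1) :
    orient a b (s • x + t • y) = s * orient a b x + t * orient a b y := by
  obtain rfl : t = 1 - s := by linarith
  simp only [orient, Prod.fst_add, Prod.snd_add, Prod.smul_fst, Prod.smul_snd, smul_eq_mul]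
  ring
lemma orient_sum (a b c q : Pt) :
    orient b c q + orient c a q + orient a b q = orient a b c := by unfold orient; ring
lemma orient_barycenter (a b c q : Pt) :
    orient b c q • a + orient c a q • b + orient a b q • c = orient a b c • q := by
  refine Prod.ext ?_ ?_ <;>
    simp only [orient, Prod.fst_add, Prod.snd_add, Prod.smul_fst, Prod.smul_snd, smul_eq_mul] <;>
    ring
lemma hull_orient_nonneg {S : Set Pt} {a b : Pt} (h : ∀ q ∈ S, 0 ≤ orient a b q) :
    ∀ q ∈ convexHull ℝ S, 0 ≤ orient a b q := by
  have hc : Convex ℝ {q : Pt | 0 ≤ orient a b q} := by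
    intro x hx y hy s t hs ht hst
    simp only [mem_setOf_eq] at *
    rw [orient_combo a b x y s t hst]
    nlinarith
  exact fun q hq => convexHull_min h hc hq

/-- Barycentric decomposition of a point strictly inside a triangle. -/
lemma tri_combo {a b c q : Pt} (h : 0 < orient a b c) (h1 : 0 < orient a b q)
    (h2 : 0 < orient b c q) (h3 : 0 < orient c a q) :
    ∃ w₁ w₂ : ℝ, ∃ m : Pt, 0 < w₁ ∧ 0 < w₂ ∧ w₁ + w₂ = 1 ∧ m ∈ segment ℝ b c ∧
      w₁ • a + w₂ • m = q := by
  set o := orient a b c with ho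
  set wa := orient b c q with hwa
  set wb := orient c a q with hwb
  set wc := orient a b q with hwc
  have hsum : wa + wb + wc = o := orient_sum a b c q
  have hμ : 0 < wb + wc := by linarith
  refine ⟨wa / o, (wb + wc) / o, (wb / (wb + wc)) • b + (wc / (wb + wc)) • c,
    div_pos h2 h, div_pos hμ h, by field_simp; linarith, ?_, ?_⟩
  · exact ⟨wb / (wb + wc), wc / (wb + wc), le_of_lt (div_pos h3 hμ),
      le_of_lt (div_pos h1 hμ), by field_simp, rfl⟩
  · have e1 : ((wb + wc) / o) • ((wb / (wb + wc)) • b + (wc / (wb + wc)) • c)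
        = (wb / o) • b + (wc / o) • c := by
      rw [smul_add, smul_smul, smul_smul]
      congr 2 <;> field_simp <;> ring
    rw [e1]
    have e2 : (wa / o) • a + ((wb / o) • b + (wc / o) • c)
        = (o⁻¹ : ℝ) • (wa • a + wb • b + wc • c) := by
      simp only [smul_add, smul_smul]
      rw [div_eq_inv_mul, div_eq_inv_mul, div_eq_inv_mul]
      abel
    rw [e2, orient_barycenter, smul_smul, inv_mul_cancel₀ (ne_of_gt h), one_smul]

lemma mem_interior_tri {a b c q : Pt} (h : 0 < orient a b c)
    (h1 : 0 < orient a b q) (h2 : 0 < orient b c q) (h3 : 0 < orient c a q) :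
    q ∈ interior (convexHull ℝ ({a, b, c} : Set Pt)) := by
  set S : Set Pt := {z | 0 < orient a b z ∧ 0 < orient b c z ∧ 0 < orient c a z} with hS
  have hc : ∀ u v : Pt, Continuous fun z : Pt => orient u v z := by
    intro u v; unfold orient; fun_prop
  have hopen : IsOpen S := by
    have he : S = {z | 0 < orient a b z} ∩ ({z | 0 < orient b c z} ∩ {z | 0 < orient c a z}) :=
      rfl
    rw [he]
    exact (isOpen_lt continuous_const (hc a b)).inter
      ((isOpen_lt continuous_const (hc b c)).inter (isOpen_lt continuous_const (hc c a)))
  have hsub : S ⊆ convexHull ℝ ({a, b, c} : Set Pt) := by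
    rintro z ⟨z1, z2, z3⟩
    obtain ⟨w₁, w₂, m, hw₁, hw₂, hsum, hm, hrepr⟩ := tri_combo h z1 z2 z3
    have hK : Convex ℝ (convexHull ℝ ({a, b, c} : Set Pt)) := convex_convexHull ℝ _
    have haK : a ∈ convexHull ℝ ({a, b, c} : Set Pt) := subset_convexHull ℝ _ (by simp)
    have hbK : b ∈ convexHull ℝ ({a, b, c} : Set Pt) := subset_convexHull ℝ _ (by simp)
    have hcK : c ∈ convexHull ℝ ({a, b, c} : Set Pt) := subset_convexHull ℝ _ (by simp)
    have hmK : m ∈ convexHull ℝ ({a, b, c} : Set Pt) := hK.segment_subset hbK hcK hm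
    exact hrepr ▸ hK haK hmK hw₁.le hw₂.le hsum
  exact interior_maximal hsub hopen ⟨h1, h2, h3⟩

lemma interior_tri_pos1 {a b c q : Pt} (h : 0 < orient a b c)
    (hq : q ∈ interior (convexHull ℝ ({a, b, c} : Set Pt))) : 0 < orient a b q := by
  have hnn : ∀ z ∈ convexHull ℝ ({a, b, c} : Set Pt), 0 ≤ orient a b z := by
    refine hull_orient_nonneg ?_
    rintro z (rfl | rfl | rfl)
    · simp
    · simp
    · exact h.le
  have hm : 0 < (b.1 - a.1) ^ 2 + (b.2 - a.2) ^ 2 := by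
    by_contra hc
    push_neg at hc
    have e1 : b.1 - a.1 = 0 := by nlinarith [sq_nonneg (b.1 - a.1), sq_nonneg (b.2 - a.2)]
    have e2 : b.2 - a.2 = 0 := by nlinarith [sq_nonneg (b.1 - a.1), sq_nonneg (b.2 - a.2)]
    have : orient a b c = 0 := by unfold orient; rw [e1, e2]; ring
    linarith
  set d : Pt := (b.2 - a.2, a.1 - b.1) with hd
  set M : ℝ := |d.1| + |d.2| + 1 with hM
  have hM0 : 0 < M := by positivity
  obtain ⟨ε, hε, hball⟩ := Metric.isOpen_iff.mp isOpen_interior q hq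
  set t : ℝ := ε / (2 * M) with ht
  have ht0 : 0 < t := by positivity
  have htM : t * M = ε / 2 := by rw [ht]; field_simp
  have hmem : q + t • d ∈ convexHull ℝ ({a, b, c} : Set Pt) := by
    refine interior_subset (hball ?_)
    have hd1 : dist (q + t • d).1 q.1 = t * |d.1| := by
      simp only [Prod.fst_add, Prod.smul_fst, smul_eq_mul, Real.dist_eq]
      rw [add_sub_cancel_left, abs_mul, abs_of_pos ht0]
    have hd2 : dist (q + t • d).2 q.2 = t * |d.2| := by
      simp only [Prod.snd_add, Prod.smul_snd, smul_eq_mul, Real.dist_eq]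
      rw [add_sub_cancel_left, abs_mul, abs_of_pos ht0]
    have h1 : t * |d.1| < ε := by nlinarith [abs_nonneg d.1, abs_nonneg d.2]
    have h2 : t * |d.2| < ε := by nlinarith [abs_nonneg d.1, abs_nonneg d.2]
    rw [Metric.mem_ball, Prod.dist_eq, hd1, hd2]
    exact max_lt h1 h2
  have hval : orient a b (q + t • d)
      = orient a b q - t * ((b.1 - a.1) ^ 2 + (b.2 - a.2) ^ 2) := by
    simp only [orient, Prod.fst_add, Prod.snd_add, Prod.smul_fst, Prod.smul_snd, smul_eq_mul, hd]
    ring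
  have := hnn _ hmem
  rw [hval] at this
  nlinarith

lemma pair_comm_tri (a b c : Pt) :
    ({b, c, a} : Set Pt) = ({a, b, c} : Set Pt) := by
  ext z; simp only [mem_insert_iff, mem_singleton_iff]; tauto

lemma interior_tri_orient {a b c q : Pt} (h : 0 < orient a b c)
    (hq : q ∈ interior (convexHull ℝ ({a, b, c} : Set Pt))) :
    0 < orient a b q ∧ 0 < orient b c q ∧ 0 < orient c a q := by
  refine ⟨interior_tri_pos1 h hq, ?_, ?_⟩
  · exact interior_tri_pos1 (by rw [← orient_cyc]; exact h) (by rw [pair_comm_tri]; exact hq)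
  · exact interior_tri_pos1 (by rw [orient_cyc]; exact h)
      (by rw [pair_comm_tri b c a, pair_comm_tri]; exact hq)

lemma not_extreme_interior {K : Set Pt} (hK : Convex ℝ K) {a b c x : Pt}
    (ha : a ∈ K) (hb : b ∈ K) (hc : c ∈ K) (habc : 0 < orient a b c)
    (hx : x ∈ K.extremePoints ℝ) (hxa : x ≠ a)
    (hint : x ∈ interior (convexHull ℝ ({a, b, c} : Set Pt))) : False := by
  obtain ⟨h1, h2, h3⟩ := interior_tri_orient habc hint
  obtain ⟨w₁, w₂, m, hw₁, hw₂, hsum, hm, hrepr⟩ := tri_combo habc h1 h2 h3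
  have hmK : m ∈ K := hK.segment_subset hb hc hm
  have := hx.2 ha hmK ⟨w₁, w₂, hw₁, hw₂, hsum, hrepr⟩
  exact hxa this.symm


lemma extremePts_subset (S : Set Pt) : extremePts S ⊆ S :=
  extremePoints_convexHull_subset

lemma extremePts_nonempty {S : Set Pt} (hf : S.Finite) (hne : S.Nonempty) :
    (extremePts S).Nonempty :=
  (hf.isCompact_convexHull (𝕜 := ℝ)).extremePoints_nonempty (hne.mono (subset_convexHull ℝ S))

lemma hull_extremePts {S : Set Pt} (hf : S.Finite) :
    convexHull ℝ (extremePts S) = convexHull ℝ S := by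
  have h1 := closure_convexHull_extremePoints (hf.isCompact_convexHull (𝕜 := ℝ)) (convex_convexHull ℝ S)
  have hE : (extremePts S).Finite := hf.subset (extremePts_subset S)
  rw [show extremePoints ℝ ((convexHull ℝ) S) = extremePts S from rfl,
    IsClosed.closure_eq (hE.isClosed_convexHull (𝕜 := ℝ))] at h1
  exact h1

lemma peel_ncard_lt {S : Set Pt} (hf : S.Finite) (hne : S.Nonempty) :
    (peel S).ncard < S.ncard := by
  obtain ⟨x, hx⟩ := extremePts_nonempty hf hne
  have hss : peel S ⊂ S := by
    refine ⟨diff_subset, fun hsub => ?_⟩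
    exact (hsub (extremePts_subset S hx)).2 hx
  exact Set.ncard_lt_ncard hss hf

lemma peel_finite {S : Set Pt} (hf : S.Finite) : (peel S).Finite := hf.diff

lemma peel_iterate_empty : ∀ (m : ℕ) (S : Set Pt), S.Finite → S.ncard ≤ m →
    ∃ k, peel^[k] S = ∅ := by
  intro m
  induction m with
  | zero =>
    intro S hf h0
    exact ⟨0, by simpa using (Set.ncard_eq_zero hf).mp (le_antisymm h0 (Nat.zero_le _))⟩
  | succ m ih =>
    intro S hf hle
    rcases S.eq_empty_or_nonempty with rfl | hne
    · exact ⟨0, rfl⟩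
    · obtain ⟨k, hk⟩ := ih (peel S) (peel_finite hf)
        (by have := peel_ncard_lt hf hne; omega)
      exact ⟨k + 1, by rwa [Function.iterate_succ_apply]⟩


lemma count_lemma (X : Set Pt) (hfin : X.Finite) (hgp : GenPos X)
    (hr : 3 ≤ (extremePts X).ncard)
    (huniq : ∀ a ∈ extremePts X, ∀ b ∈ extremePts X, ∀ c ∈ extremePts X,
      a ≠ b → a ≠ c → b ≠ c →
      ∃! p : Pt, p ∈ (X \ extremePts X) ∩ interior (convexHull ℝ ({a, b, c} : Set Pt))) :
    (X \ extremePts X).ncard + 2 = (extremePts X).ncard := by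
  set E := extremePts X with hE
  set r := E.ncard with hrdef
  have hEX : E ⊆ X := extremePts_subset X
  have hEfin : E.Finite := hfin.subset hEX
  -- a direction that is injective on X
  set Bad : Set ℝ :=
    ((fun pq : Pt × Pt => (pq.1.1 - pq.2.1) / (pq.2.2 - pq.1.2)) '' (X ×ˢ X)) ∪ {0} with hBad
  have hBadfin : Bad.Finite := (((hfin.prod hfin).image _)).union (finite_singleton 0)
  obtain ⟨ε, hε⟩ := hBadfin.infinite_compl.nonempty
  set f : Pt → ℝ := fun q => q.1 + ε * q.2 with hf
  have hfinj : Set.InjOn f X := by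
    intro u hu v hv huv
    by_contra hne
    rcases eq_or_ne u.2 v.2 with h2 | h2
    · refine hne (Prod.ext ?_ h2)
      simp only [hf] at huv; rw [h2] at huv; linarith
    · apply hε
      refine Or.inl ⟨(u, v), mk_mem_prod hu hv, ?_⟩
      have : v.2 - u.2 ≠ 0 := fun h => h2 (by linarith)
      field_simp
      simp only [hf] at huv; linarith
  -- the base vertex
  have hEne : E.Nonempty := Set.nonempty_of_ncard_ne_zero (by omega)
  obtain ⟨p₀, hp₀E, hp₀min⟩ := Set.exists_min_image E f hEfin hEne
  have hp₀X : p₀ ∈ X := hEX hp₀E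
  have hXhull : ∀ q ∈ X, q ∈ convexHull ℝ E := by
    intro q hq
    rw [hE, hull_extremePts hfin]
    exact subset_convexHull ℝ X hq
  have hfmono : ∀ q ∈ convexHull ℝ E, f p₀ ≤ f q := by
    intro q hq
    refine convexHull_min hp₀min ?_ hq
    intro x hx y hy s t hs ht hst
    have hx' : f p₀ ≤ f x := hx
    have hy' : f p₀ ≤ f y := hy
    show f p₀ ≤ f (s • x + t • y)
    obtain rfl : t = 1 - s := by linarith
    have hcomb : f (s • x + (1 - s) • y) = s * f x + (1 - s) * f y := by
      simp only [hf, Prod.fst_add, Prod.snd_add, Prod.smul_fst, Prod.smul_snd, smul_eq_mul]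
      ring
    nlinarith
  have hhalf : ∀ q ∈ X, q ≠ p₀ → f p₀ < f q := by
    intro q hq hne
    refine lt_of_le_of_ne (hfmono q (hXhull q hq)) fun h => hne (hfinj hq hp₀X h.symm)
  -- key function
  set D : Pt → ℝ := fun q => (q.1 - p₀.1) + ε * (q.2 - p₀.2) with hDdef
  have hD : ∀ q ∈ X, q ≠ p₀ → 0 < D q := by
    intro q hq hne
    have := hhalf q hq hne
    simp only [hDdef, hf] at *
    linarith
  set key : Pt → ℝ := fun q => ((q.2 - p₀.2) - ε * (q.1 - p₀.1)) / D q with hkeydef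
  have hkey : ∀ a ∈ X, a ≠ p₀ → ∀ b ∈ X, b ≠ p₀ →
      (0 < orient p₀ a b ↔ key a < key b) := by
    intro a ha hane b hb hbne
    have hDa := hD a ha hane
    have hDb := hD b hb hbne
    rw [hkeydef]
    simp only
    rw [div_lt_div_iff₀ hDa hDb]
    have hid : (b.2 - p₀.2 - ε * (b.1 - p₀.1)) * D a - (a.2 - p₀.2 - ε * (a.1 - p₀.1)) * D b
        = (1 + ε ^ 2) * orient p₀ a b := by
      simp only [hDdef, orient]; ring
    have hε2 : (0:ℝ) < 1 + ε ^ 2 := by positivity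
    constructor <;> intro h <;> nlinarith
  have hkeyinj : ∀ a ∈ X, a ≠ p₀ → ∀ b ∈ X, b ≠ p₀ → key a = key b → a = b := by
    intro a ha hane b hb hbne hk
    by_contra hne
    have hor := hgp p₀ hp₀X a ha b hb (Ne.symm hane) (Ne.symm hbne) hne
    rcases lt_trichotomy (orient p₀ a b) 0 with h | h | h
    · have h' : 0 < orient p₀ b a := by rw [orient_neg]; linarith
      rw [hkey b hb hbne a ha hane] at h'
      linarith
    · exact hor h
    · rw [hkey a ha hane b hb hbne] at h
      linarith
  -- the fan enumeration
  set E' : Set Pt := E \ {p₀} with hE'def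
  have hE'fin : E'.Finite := hEfin.diff
  have hE'mem : ∀ q ∈ E', q ∈ X ∧ q ≠ p₀ := by
    rintro q ⟨hq1, hq2⟩
    exact ⟨hEX hq1, by simpa using hq2⟩
  have hE'card : E'.ncard = r - 1 := by
    rw [hE'def, Set.ncard_diff_singleton_of_mem hp₀E]
  set T : Finset ℝ := (hE'fin.toFinset).image key with hT
  have hTcard : T.card = r - 1 := by
    rw [hT, Finset.card_image_of_injOn, ← Set.ncard_eq_toFinset_card _ hE'fin, hE'card]
    intro a ha b hb hab
    have ha' := hE'fin.mem_toFinset.mp (Finset.mem_coe.mp ha)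
    have hb' := hE'fin.mem_toFinset.mp (Finset.mem_coe.mp hb)
    exact hkeyinj a (hE'mem a ha').1 (hE'mem a ha').2 b (hE'mem b hb').1 (hE'mem b hb').2 hab
  set e := T.orderIsoOfFin hTcard with he
  have hpex : ∀ i : Fin (r - 1), ∃ q, q ∈ E' ∧ key q = (e i : ℝ) := by
    intro i
    have hmem : (e i : ℝ) ∈ Finset.image key hE'fin.toFinset := (e i).2
    obtain ⟨q, hq, hkq⟩ := Finset.mem_image.mp hmem
    exact ⟨q, hE'fin.mem_toFinset.mp hq, hkq⟩
  set p : Fin (r - 1) → Pt := fun i => (hpex i).choose with hp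
  have hpE' : ∀ i, p i ∈ E' := fun i => (hpex i).choose_spec.1
  have hpkey : ∀ i, key (p i) = (e i : ℝ) := fun i => (hpex i).choose_spec.2
  have hpE : ∀ i, p i ∈ E := fun i => (hpE' i).1
  have hpX : ∀ i, p i ∈ X := fun i => (hE'mem _ (hpE' i)).1
  have hpne : ∀ i, p i ≠ p₀ := fun i => (hE'mem _ (hpE' i)).2
  have hpmono : ∀ i j : Fin (r - 1), i < j → key (p i) < key (p j) := by
    intro i j hij
    rw [hpkey, hpkey]
    exact_mod_cast e.strictMono hij
  have hporient : ∀ i j : Fin (r - 1), i < j → 0 < orient p₀ (p i) (p j) := fun i j hij =>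
    (hkey (p i) (hpX i) (hpne i) (p j) (hpX j) (hpne j)).mpr (hpmono i j hij)
  have hpinj : Function.Injective p := by
    intro i j hij
    by_contra hne
    rcases lt_or_gt_of_ne hne with h | h
    · have := hpmono i j h; rw [hij] at this; linarith
    · have := hpmono j i h; rw [hij] at this; linarith
  have hpsurj : ∀ q ∈ E', ∃ i, p i = q := by
    intro q hq
    have hkq : key q ∈ T := by
      rw [hT]
      exact Finset.mem_image_of_mem key (hE'fin.mem_toFinset.mpr hq)
    obtain ⟨i, hi⟩ := e.surjective ⟨key q, hkq⟩
    refine ⟨i, hkeyinj _ (hpX i) (hpne i) q (hE'mem q hq).1 (hE'mem q hq).2 ?_⟩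
    rw [hpkey i, hi]
  -- triangle indices
  set pl : Fin (r - 2) → Fin (r - 1) := fun i => ⟨i.val, by have := i.isLt; omega⟩ with hpl
  set pr : Fin (r - 2) → Fin (r - 1) := fun i => ⟨i.val + 1, by have := i.isLt; omega⟩ with hpr
  have hplt : ∀ i : Fin (r - 2), pl i < pr i := fun i => by
    rw [Fin.lt_def]; simp [hpl, hpr]
  have horient_tri : ∀ i : Fin (r - 2), 0 < orient p₀ (p (pl i)) (p (pr i)) := fun i =>
    hporient _ _ (hplt i)
  have hK : Convex ℝ (convexHull ℝ X) := convex_convexHull ℝ X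
  have hmemK : ∀ z ∈ X, z ∈ convexHull ℝ X := fun z hz => subset_convexHull ℝ X hz
  have hedge : ∀ i : Fin (r - 2), ∀ q ∈ E, q ≠ p (pl i) → q ≠ p (pr i) →
      0 < orient (p (pl i)) (p (pr i)) q := by
    intro i q hqE hq1 hq2
    rcases eq_or_ne q p₀ with hq0 | hqp₀
    · rw [hq0, ← orient_cyc p₀ (p (pl i)) (p (pr i))]
      exact horient_tri i
    · obtain ⟨j, rfl⟩ := hpsurj q ⟨hqE, by simpa using hqp₀⟩
      have hji : j ≠ pl i := fun h => hq1 (by rw [h])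
      have hjr : j ≠ pr i := fun h => hq2 (by rw [h])
      by_contra hle
      push_neg at hle
      have hne0 : orient (p (pl i)) (p (pr i)) (p j) ≠ 0 :=
        hgp _ (hpX _) _ (hpX _) _ (hpX _) (hpinj.ne (ne_of_lt (hplt i)))
          (fun h => hq1 h.symm) (fun h => hq2 h.symm)
      have hlt : orient (p (pl i)) (p (pr i)) (p j) < 0 := lt_of_le_of_ne hle hne0
      rcases lt_or_gt_of_ne hji with hj1 | hj1
      · have t1 : 0 < orient p₀ (p j) (p (pr i)) := hporient _ _ (lt_trans hj1 (hplt i))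
        have s1 : 0 < orient p₀ (p j) (p (pl i)) := hporient _ _ hj1
        have s2 : 0 < orient (p j) (p (pr i)) (p (pl i)) := by
          have hcyc : orient (p j) (p (pl i)) (p (pr i))
              = orient (p (pl i)) (p (pr i)) (p j) := orient_cyc _ _ _
          rw [orient_neg, hcyc]
          linarith
        have s3 : 0 < orient (p (pr i)) p₀ (p (pl i)) := by
          rw [orient_cyc]
          exact horient_tri i
        exact not_extreme_interior hK (hmemK _ hp₀X) (hmemK _ (hpX j)) (hmemK _ (hpX (pr i)))
          t1 (hpE (pl i)) (hpne (pl i)) (mem_interior_tri t1 s1 s2 s3)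
      · have hj2 : pr i < j := by
          have hv : i.val < j.val := Fin.lt_def.mp hj1
          have hv2 : j.val ≠ i.val + 1 := fun h => hjr (Fin.ext h)
          have hpv : (pr i).val = i.val + 1 := rfl
          rw [Fin.lt_def, hpv]
          omega
        have t1 : 0 < orient p₀ (p (pl i)) (p j) := hporient _ _ hj1
        have s1 : 0 < orient p₀ (p (pl i)) (p (pr i)) := horient_tri i
        have s2 : 0 < orient (p (pl i)) (p j) (p (pr i)) := by
          rw [orient_neg]
          linarith
        have s3 : 0 < orient (p j) p₀ (p (pr i)) := by
          rw [orient_cyc]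
          exact hporient _ _ hj2
        exact not_extreme_interior hK (hmemK _ hp₀X) (hmemK _ (hpX (pl i))) (hmemK _ (hpX j))
          t1 (hpE (pr i)) (hpne (pr i)) (mem_interior_tri t1 s1 s2 s3)
  -- interior points vs edges
  have hedgeI : ∀ i : Fin (r - 2), ∀ q ∈ X \ E, 0 < orient (p (pl i)) (p (pr i)) q := by
    intro i q hq
    have hnn : ∀ z ∈ E, 0 ≤ orient (p (pl i)) (p (pr i)) z := by
      intro z hz
      rcases eq_or_ne z (p (pl i)) with rfl | hz1
      · simp
      rcases eq_or_ne z (p (pr i)) with rfl | hz2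
      · simp
      exact (hedge i z hz hz1 hz2).le
    have h0 := hull_orient_nonneg hnn q (hXhull q hq.1)
    refine lt_of_le_of_ne h0 (Ne.symm ?_)
    exact hgp _ (hpX _) _ (hpX _) q hq.1 (hpinj.ne (ne_of_lt (hplt i)))
      (fun h => hq.2 (h ▸ hpE (pl i))) (fun h => hq.2 (h ▸ hpE (pr i)))
  set i0 : Fin (r - 1) := ⟨0, by omega⟩ with hi0
  set ilast : Fin (r - 1) := ⟨r - 2, by omega⟩ with hilast
  have hfirstkey : ∀ q ∈ X \ E, key (p i0) < key q := by
    intro q hq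
    have hnn : ∀ z ∈ E, 0 ≤ orient p₀ (p i0) z := by
      intro z hz
      rcases eq_or_ne z p₀ with rfl | hz0
      · simp
      rcases eq_or_ne z (p i0) with rfl | hz1
      · simp
      obtain ⟨j, rfl⟩ := hpsurj z ⟨hz, by simpa using hz0⟩
      have : i0 < j := by
        have h0 : i0.val = 0 := rfl
        have hjne : j.val ≠ 0 := fun h => hz1 (congrArg p (Fin.ext (h.trans h0.symm)))
        rw [Fin.lt_def, h0]
        omega
      exact (hporient _ _ this).le
    have h0 := hull_orient_nonneg hnn q (hXhull q hq.1)
    have hqp₀ : q ≠ p₀ := fun h => hq.2 (h ▸ hp₀E)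
    have hs : 0 < orient p₀ (p i0) q := by
      refine lt_of_le_of_ne h0 (Ne.symm ?_)
      exact hgp _ hp₀X _ (hpX _) q hq.1 (Ne.symm (hpne i0)) (Ne.symm hqp₀)
        (fun h => hq.2 (h ▸ hpE i0))
    exact (hkey _ (hpX _) (hpne _) q hq.1 hqp₀).mp hs
  have hlastkey : ∀ q ∈ X \ E, key q < key (p ilast) := by
    intro q hq
    have hnn : ∀ z ∈ E, 0 ≤ orient (p ilast) p₀ z := by
      intro z hz
      rcases eq_or_ne z p₀ with rfl | hz0
      · simp
      rcases eq_or_ne z (p ilast) with rfl | hz1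
      · simp
      obtain ⟨j, rfl⟩ := hpsurj z ⟨hz, by simpa using hz0⟩
      have hjl : j < ilast := by
        have h0 : ilast.val = r - 2 := rfl
        have h1 : j.val ≠ r - 2 := fun h => hz1 (congrArg p (Fin.ext (h.trans h0.symm)))
        have h2 := j.isLt
        rw [Fin.lt_def, h0]
        omega
      have : orient (p ilast) p₀ (p j) = orient p₀ (p j) (p ilast) := by
        rw [orient_cyc]
      rw [this]
      exact (hporient _ _ hjl).le
    have h0 := hull_orient_nonneg hnn q (hXhull q hq.1)
    have hqp₀ : q ≠ p₀ := fun h => hq.2 (h ▸ hp₀E)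
    have hs : 0 < orient (p ilast) p₀ q := by
      refine lt_of_le_of_ne h0 (Ne.symm ?_)
      exact hgp _ (hpX _) _ hp₀X q hq.1 (hpne ilast) (fun h => hq.2 (h ▸ hpE ilast))
        (Ne.symm hqp₀)
    have hs' : 0 < orient p₀ q (p ilast) := by
      rw [← orient_cyc (p ilast) p₀ q]
      exact hs
    exact (hkey q hq.1 hqp₀ _ (hpX _) (hpne _)).mp hs'
  have hcover : ∀ q ∈ X \ E, ∃ i : Fin (r - 2),
      q ∈ interior (convexHull ℝ ({p₀, p (pl i), p (pr i)} : Set Pt)) := by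
    intro q hq
    have hqX := hq.1
    have hqp₀ : q ≠ p₀ := fun h => hq.2 (h ▸ hp₀E)
    set A : Finset (Fin (r - 1)) := Finset.univ.filter (fun i => key (p i) < key q) with hA
    have h0A : i0 ∈ A := by
      rw [hA, Finset.mem_filter]
      exact ⟨Finset.mem_univ _, hfirstkey q hq⟩
    set im := A.max' ⟨i0, h0A⟩ with him
    have hkim : key (p im) < key q := (Finset.mem_filter.mp (A.max'_mem ⟨i0, h0A⟩)).2
    have himlt : im.val < r - 2 := by
      by_contra hcon
      push_neg at hcon
      have hile : ilast.val = r - 2 := rfl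
      have : im = ilast := Fin.ext (by have := im.isLt; omega)
      rw [this] at hkim
      linarith [hlastkey q hq]
    set i : Fin (r - 2) := ⟨im.val, himlt⟩ with hidef
    have hpli : pl i = im := rfl
    have hkpr : key q < key (p (pr i)) := by
      have hnA : pr i ∉ A := by
        intro hmem
        have := A.le_max' _ hmem
        rw [← him] at this
        have hv : (pr i).val ≤ im.val := Fin.le_def.mp this
        have : (pr i).val = im.val + 1 := rfl
        omega
      rw [hA, Finset.mem_filter] at hnA
      push_neg at hnA
      have hge := hnA (Finset.mem_univ _)
      refine lt_of_le_of_ne hge ?_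
      intro hkeq
      have heq : q = p (pr i) := hkeyinj q hqX hqp₀ _ (hpX _) (hpne _) hkeq
      exact hq.2 (by rw [heq]; exact hpE (pr i))
    refine ⟨i, mem_interior_tri (horient_tri i) ?_ ?_ ?_⟩
    · rw [hpli]
      exact (hkey _ (hpX im) (hpne im) q hqX hqp₀).mpr hkim
    · exact hedgeI i q hq
    · have h' : 0 < orient p₀ q (p (pr i)) := (hkey q hqX hqp₀ _ (hpX _) (hpne _)).mpr hkpr
      rw [orient_cyc]
      exact h'
  -- the unique interior points and the bijection
  have hFex : ∀ i : Fin (r - 2), ∃! z : Pt,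
      z ∈ (X \ E) ∩ interior (convexHull ℝ ({p₀, p (pl i), p (pr i)} : Set Pt)) :=
    fun i => huniq p₀ hp₀E _ (hpE (pl i)) _ (hpE (pr i)) (Ne.symm (hpne (pl i)))
      (Ne.symm (hpne (pr i))) (hpinj.ne (ne_of_lt (hplt i)))
  set F : Fin (r - 2) → Pt := fun i => (hFex i).exists.choose with hF
  have hFspec : ∀ i, F i ∈ (X \ E) ∩ interior (convexHull ℝ ({p₀, p (pl i), p (pr i)} : Set Pt)) :=
    fun i => (hFex i).exists.choose_spec
  have hFuniq : ∀ i, ∀ z ∈ (X \ E) ∩ interior (convexHull ℝ ({p₀, p (pl i), p (pr i)} : Set Pt)),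
      z = F i := fun i z hz => (hFex i).unique hz (hFspec i)
  have hkeyint : ∀ i : Fin (r - 2), ∀ z ∈ X \ E,
      z ∈ interior (convexHull ℝ ({p₀, p (pl i), p (pr i)} : Set Pt)) →
      key (p (pl i)) < key z ∧ key z < key (p (pr i)) := by
    intro i z hzI hzint
    obtain ⟨o1, o2, o3⟩ := interior_tri_orient (horient_tri i) hzint
    have hzX := hzI.1
    have hzp₀ : z ≠ p₀ := fun h => hzI.2 (h ▸ hp₀E)
    refine ⟨(hkey _ (hpX _) (hpne _) z hzX hzp₀).mp o1, ?_⟩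
    have h' : 0 < orient p₀ z (p (pr i)) := by
      rw [← orient_cyc (p (pr i)) p₀ z]
      exact o3
    exact (hkey z hzX hzp₀ _ (hpX _) (hpne _)).mp h'
  have haux : ∀ i j : Fin (r - 2), i < j → F i ≠ F j := by
    intro i j hij heq
    have h1 := hkeyint i (F i) (hFspec i).1 (hFspec i).2
    have h2 := hkeyint j (F j) (hFspec j).1 (hFspec j).2
    rw [heq] at h1
    have hle : key (p (pr i)) ≤ key (p (pl j)) := by
      rcases eq_or_ne (pr i) (pl j) with he | hne2
      · rw [he]
      · refine (hpmono _ _ ?_).le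
        have hv : i.val < j.val := Fin.lt_def.mp hij
        have e1 : (pr i).val = i.val + 1 := rfl
        have e2 : (pl j).val = j.val := rfl
        have hne3 : i.val + 1 ≠ j.val := fun h => hne2 (Fin.ext (by rw [e1, e2]; exact h))
        rw [Fin.lt_def, e1, e2]
        omega
    linarith [h1.2, h2.1]
  have hinjF : ∀ i j : Fin (r - 2), F i = F j → i = j := by
    intro i j hij
    rcases lt_trichotomy i j with h | h | h
    · exact absurd hij (haux i j h)
    · exact h
    · exact absurd hij.symm (haux j i h)
  have hrange : X \ E = F '' Set.univ := by
    apply Subset.antisymm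
    · intro q hq
      obtain ⟨i, hi⟩ := hcover q hq
      exact ⟨i, mem_univ i, (hFuniq i q ⟨hq, hi⟩).symm⟩
    · rintro z ⟨i, -, rfl⟩
      exact (hFspec i).1
  have hcard : (X \ E).ncard = r - 2 := by
    rw [hrange, Set.ncard_image_of_injOn (fun i _ j _ h => hinjF i j h), Set.ncard_univ,
      Nat.card_eq_fintype_card, Fintype.card_fin]
  omega

/-- A nested almost convex set with `n ≥ 2` points has even cardinality and
exactly `(n+2)/2` extreme points; in particular it has more than `n/2` points in convex
position. -/
theorem nacs_hull_size (X : Set Pt) (hX : IsNACS X) (n : ℕ) (hn : n = X.ncard) (h2 : 2 ≤ n) :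
    Even n ∧ (extremePts X).ncard = (n + 2) / 2 ∧ n / 2 < (extremePts X).ncard := by
  classical
  obtain ⟨hfin, hne, hgp, hcond⟩ := hX
  have hkex : ∃ k, peel^[k] X = ∅ := peel_iterate_empty X.ncard X hfin le_rfl
  set k := Nat.find hkex with hkdef
  have hlay : HasLayers X k := ⟨Nat.find_spec hkex, fun j hj => Nat.find_min hkex hj⟩
  have hk1 : 1 ≤ k := by
    by_contra h0
    push_neg at h0
    have h00 : k = 0 := by omega
    have hsp := Nat.find_spec hkex
    rw [← hkdef, h00] at hsp
    simp only [Function.iterate_zero, id_eq] at hsp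
    exact hne.ne_empty hsp
  have hlayk : layer X k k = extremePts X := by
    unfold layer layerSub
    rw [Nat.sub_self]
    simp only [Function.iterate_zero, id_eq]
  have hsubk : layerSub X k (k - 1) = X \ extremePts X := by
    unfold layerSub
    rw [show k - (k - 1) = 1 by omega, Function.iterate_one]
    rfl
  have hcondk := hcond k hlay k hk1 le_rfl
  rw [hlayk, hsubk] at hcondk
  have hEX : extremePts X ⊆ X := extremePts_subset X
  have hEfin : (extremePts X).Finite := hfin.subset hEX
  rcases le_or_gt 3 (extremePts X).ncard with h3 | h3
  · have hcnt := count_lemma X hfin hgp h3 hcondk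
    have hd : (X \ extremePts X).ncard = X.ncard - (extremePts X).ncard :=
      Set.ncard_diff hEX hEfin
    have hle : (extremePts X).ncard ≤ X.ncard := Set.ncard_le_ncard hEX hfin
    refine ⟨⟨(extremePts X).ncard - 1, by omega⟩, by omega, by omega⟩
  · have hEne : (extremePts X).Nonempty := extremePts_nonempty hfin hne
    have hEpos : 0 < (extremePts X).ncard := (Set.ncard_pos hEfin).mpr hEne
    have hXhullE : ∀ q ∈ X, q ∈ convexHull ℝ (extremePts X) := by
      intro q hq
      rw [hull_extremePts hfin]
      exact subset_convexHull ℝ X hq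
    have hcase : (extremePts X).ncard = 1 ∨ (extremePts X).ncard = 2 := by omega
    rcases hcase with h1 | h1
    · obtain ⟨a, ha⟩ := Set.ncard_eq_one.mp h1
      have hsub : X ⊆ {a} := by
        intro q hq
        have hq' := hXhullE q hq
        rwa [ha, convexHull_singleton] at hq'
      have : X.ncard ≤ 1 := le_trans (Set.ncard_le_ncard hsub (finite_singleton a)) (by simp)
      omega
    · rcases (show n = 2 ∨ 3 ≤ n by omega) with hn2 | hn3
      · have hXE : extremePts X = X := Set.eq_of_subset_of_ncard_le hEX (by omega) hfin
        rw [hXE, ← hn]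
        exact ⟨⟨1, by omega⟩, by omega, by omega⟩
      · exfalso
        obtain ⟨a, b, hab, hab2⟩ := Set.ncard_eq_two.mp h1
        have hns : ¬ X ⊆ extremePts X := fun hsub => by
          have := Set.ncard_le_ncard hsub hEfin
          omega
        obtain ⟨c, hcX, hcE⟩ := not_subset.mp hns
        have hc : c ∈ segment ℝ a b := by
          have := hXhullE c hcX
          rwa [hab2, convexHull_pair] at this
        obtain ⟨u, v, hu, hv, huv, hcc⟩ := hc
        have horc : orient a b c = 0 := by
          rw [← hcc, orient_combo a b a b u v huv]
          simp
        have haE : a ∈ extremePts X := by rw [hab2]; exact Or.inl rfl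
        have hbE : b ∈ extremePts X := by rw [hab2]; exact Or.inr rfl
        exact hgp a (hEX haE) b (hEX hbE) c hcX hab
          (fun h => hcE (h ▸ haE)) (fun h => hcE (h ▸ hbE)) horc
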